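/- A finite simple graph is C_4-free-split if and only if it is isomorphic to the cycle C_5. -/
import Mathlib

open SimpleGraph

set_option maxRecDepth 10000
set_option maxHeartbeats 1000000

/-- The contraction `G/uv` of the edge between `u` and `v`: the vertex `v` is deleted
and merged into `u`, whose new neighbourhood is `(N(u) ∪ N(v)) \\ {u, v}`. -/
def SimpleGraph.contractEdge {V : Type*} (G : SimpleGraph V) (u v : V) :
    SimpleGraph {x : V // x ≠ v} :=
  SimpleGraph.fromRel fun a b => G.Adj a.1 b.1 ∨ (a.1 = u ∧ G.Adj v b.1)

/-- `J` is `G`-free-split (for a single graph `G`): `J` is `G`-free (no induced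
subgraph of `J` is isomorphic to `G`) and some `J`-contraction is isomorphic to `G`. -/
def IsFreeSplitOf {A B : Type*} (J : SimpleGraph A) (G : SimpleGraph B) : Prop :=
  (¬ Nonempty (G ↪g J)) ∧ ∃ a b, J.Adj a b ∧ Nonempty (G ≃g J.contractEdge a b)

lemma contract_adj {V : Type*} (G : SimpleGraph V) (u v : V) (a b : {x : V // x ≠ v}) :
    (G.contractEdge u v).Adj a b ↔ a ≠ b ∧
      ((G.Adj a.1 b.1 ∨ (a.1 = u ∧ G.Adj v b.1)) ∨ (G.Adj b.1 a.1 ∨ (b.1 = u ∧ G.Adj v a.1))) :=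
  SimpleGraph.fromRel_adj _ a b

instance {V : Type*} [DecidableEq V] (G : SimpleGraph V) [DecidableRel G.Adj] (u v : V) :
    DecidableRel ((G.contractEdge u v).Adj) :=
  fun a b => decidable_of_iff' _ (contract_adj G u v a b)

lemma noC4C5 : ¬ ∃ g : Fin 4 → Fin 5, Function.Injective g ∧
    ∀ i j, (cycleGraph 5).Adj (g i) (g j) ↔ (cycleGraph 4).Adj i j := by decide

def cf : Fin 4 → {x : Fin 5 // x ≠ 1} := fun i => ⟨![0,2,3,4] i, by fin_cases i <;> decide⟩

lemma cf_bij : Function.Bijective cf := by decide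

lemma cf_rel : ∀ a b : Fin 4,
    ((cycleGraph 5).contractEdge 0 1).Adj (cf a) (cf b) ↔ (cycleGraph 4).Adj a b := by decide

noncomputable def c4iso : cycleGraph 4 ≃g (cycleGraph 5).contractEdge 0 1 :=
  RelIso.mk (Equiv.ofBijective cf cf_bij) (cf_rel _ _)

/-- contraction transfers along isomorphisms -/
def contractIso {A B : Type*} {GA : SimpleGraph A} {GB : SimpleGraph B}
    (φ : GA ≃g GB) (u v : A) : GA.contractEdge u v ≃g GB.contractEdge (φ u) (φ v) where
  toEquiv := φ.toEquiv.subtypeEquiv fun x => not_congr (φ.toEquiv.apply_eq_iff_eq (x := x) (y := v)).symm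
  map_rel_iff' := by
    intro a b
    simp only [contract_adj, Equiv.subtypeEquiv_apply, ne_eq, Subtype.ext_iff,
      RelIso.coe_fn_toEquiv, φ.map_adj_iff, EmbeddingLike.apply_eq_iff_eq]

lemma embC4 {V : Type*} (G : SimpleGraph V) (a b c d : V)
    (hab : G.Adj a b) (hbc : G.Adj b c) (hcd : G.Adj c d) (hda : G.Adj d a)
    (hac : ¬G.Adj a c) (hbd : ¬G.Adj b d) (nac : a ≠ c) (nbd : b ≠ d) :
    ∃ g : Fin 4 → V, Function.Injective g ∧
      ∀ i j, G.Adj (g i) (g j) ↔ (cycleGraph 4).Adj i j := by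
  have hba := hab.symm; have hcb := hbc.symm; have hdc := hcd.symm; have had := hda.symm
  have hca := hac ∘ G.adj_symm; have hdb := hbd ∘ G.adj_symm
  have nab := hab.ne; have nbc := hbc.ne; have ncd := hcd.ne; have nad := hda.ne'
  have nba := nab.symm; have ncb := nbc.symm; have ndc := ncd.symm
  have nda := nad.symm; have nca := nac.symm; have ndb := nbd.symm
  refine ⟨fun i => ![a,b,c,d] i, ?_, ?_⟩
  · intro i j hij
    fin_cases i <;> fin_cases j <;>
      first
        | rfl
        | (exfalso; revert hij; simp only [Matrix.cons_val_zero, Matrix.cons_val_one,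
            Matrix.head_cons, Matrix.cons_val_two, Matrix.tail_cons, Matrix.cons_val_three,
            Matrix.cons_val_succ]; assumption)
  · intro i j
    fin_cases i <;> fin_cases j <;>
      simp only [Matrix.cons_val_zero, Matrix.cons_val_one, Matrix.head_cons,
        Matrix.cons_val_two, Matrix.tail_cons, Matrix.cons_val_three, Matrix.cons_val_succ] <;>
      first
        | exact iff_of_false (G.irrefl) (by decide)
        | exact iff_of_true (by assumption) (by decide)
        | exact iff_of_false (by assumption) (by decide)

lemma c5_of {V : Type*} (G : SimpleGraph V) (a b c d e : V)
    (hsurj : ∀ x : V, x = a ∨ x = b ∨ x = c ∨ x = d ∨ x = e)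
    (hab : G.Adj a b) (hbc : G.Adj b c) (hcd : G.Adj c d) (hde : G.Adj d e) (hea : G.Adj e a)
    (hac : ¬G.Adj a c) (had : ¬G.Adj a d) (hbd : ¬G.Adj b d) (hbe : ¬G.Adj b e)
    (hce : ¬G.Adj c e) :
    Nonempty (G ≃g cycleGraph 5) := by
  have nab : a ≠ b := hab.ne
  have nbc : b ≠ c := hbc.ne
  have ncd : c ≠ d := hcd.ne
  have nde : d ≠ e := hde.ne
  have nae : a ≠ e := hea.ne'
  have nac : a ≠ c := fun h => had (h ▸ hcd)
  have nad : a ≠ d := fun h => hac (h ▸ hcd.symm)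
  have nbd : b ≠ d := fun h => hbe (h ▸ hde)
  have nbe : b ≠ e := fun h => hce ((h ▸ hbc).symm)
  have nce : c ≠ e := fun h => hac ((h ▸ hea).symm)
  have hca := hac ∘ G.adj_symm; have hda := had ∘ G.adj_symm
  have hdb := hbd ∘ G.adj_symm; have heb := hbe ∘ G.adj_symm; have hec := hce ∘ G.adj_symm
  have hba := hab.symm; have hcb := hbc.symm; have hdc := hcd.symm
  have hed := hde.symm; have hae := hea.symm
  have nba := nab.symm; have ncb := nbc.symm; have ndc := ncd.symm
  have ned := nde.symm; have nea := nae.symm; have nca := nac.symm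
  have nda := nad.symm; have ndb := nbd.symm; have neb := nbe.symm; have nec := nce.symm
  let f : Fin 5 → V := fun i => ![a,b,c,d,e] i
  have hinj : Function.Injective f := by
    intro i j hij
    fin_cases i <;> fin_cases j <;>
      first
        | rfl
        | (exfalso; revert hij; simp only [f, Matrix.cons_val_zero, Matrix.cons_val_one,
            Matrix.head_cons, Matrix.cons_val_two, Matrix.tail_cons, Matrix.cons_val_three,
            Matrix.cons_val_four, Matrix.cons_val_succ]; assumption)
  have hsurjf : Function.Surjective f := by
    intro x
    rcases hsurj x with h | h | h | h | h
    exacts [⟨0, h.symm⟩, ⟨1, h.symm⟩, ⟨2, h.symm⟩, ⟨3, h.symm⟩, ⟨4, h.symm⟩]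
  refine ⟨(RelIso.mk (Equiv.ofBijective f ⟨hinj, hsurjf⟩) ?_).symm⟩
  intro i j
  show G.Adj (f i) (f j) ↔ (cycleGraph 5).Adj i j
  fin_cases i <;> fin_cases j <;>
    simp only [f, Matrix.cons_val_zero, Matrix.cons_val_one, Matrix.head_cons,
      Matrix.cons_val_two, Matrix.tail_cons, Matrix.cons_val_three, Matrix.cons_val_four,
      Matrix.cons_val_succ] <;>
    first
      | exact iff_of_false (G.irrefl) (by decide)
      | exact iff_of_true (by assumption) (by decide)
      | exact iff_of_false (by assumption) (by decide)

lemma forward {V : Type*} (G : SimpleGraph V)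
    (hfree : ¬ ∃ g : Fin 4 → V, Function.Injective g ∧
      ∀ i j, G.Adj (g i) (g j) ↔ (cycleGraph 4).Adj i j)
    {u v : V} (huv : G.Adj u v) (φ : cycleGraph 4 ≃g G.contractEdge u v) :
    Nonempty (G ≃g cycleGraph 5) := by
  have hne : u ≠ v := huv.ne
  set k := φ.symm ⟨u, hne⟩ with hk
  have hrot : ∀ a b : Fin 4, (cycleGraph 4).Adj (a + k) (b + k) ↔ (cycleGraph 4).Adj a b := by
    intro a b; simp [cycleGraph_adj, add_sub_add_right_eq_sub]
  let ψ : cycleGraph 4 ≃g G.contractEdge u v :=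
    (RelIso.mk (Equiv.addRight k) (hrot _ _)).trans φ
  have hψ : ∀ i : Fin 4, ψ i = φ (i + k) := fun i => rfl
  have hψ0 : ψ 0 = ⟨u, hne⟩ := by
    rw [hψ, zero_add, hk]; exact φ.apply_symm_apply _
  have hψinj : Function.Injective ψ := ψ.toEquiv.injective
  -- names
  set P := ψ 1 with hP
  set Q := ψ 2 with hQ
  set R := ψ 3 with hR
  have hPu : P.1 ≠ u := by
    intro h
    have : P = ψ 0 := by rw [hψ0]; exact Subtype.ext h
    exact absurd (hψinj this) (by decide)
  have hQu : Q.1 ≠ u := by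
    intro h
    have : Q = ψ 0 := by rw [hψ0]; exact Subtype.ext h
    exact absurd (hψinj this) (by decide)
  have hRu : R.1 ≠ u := by
    intro h
    have : R = ψ 0 := by rw [hψ0]; exact Subtype.ext h
    exact absurd (hψinj this) (by decide)
  have hPR : P.1 ≠ R.1 := fun h => absurd (hψinj (Subtype.ext h)) (by decide)
  have hPQ : P.1 ≠ Q.1 := fun h => absurd (hψinj (Subtype.ext h)) (by decide)
  have hQR : Q.1 ≠ R.1 := fun h => absurd (hψinj (Subtype.ext h)) (by decide)
  -- adjacency facts in contraction
  have h01 : (G.contractEdge u v).Adj ⟨u, hne⟩ P := by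
    rw [← hψ0]; exact ψ.map_rel_iff.mpr (by decide)
  have h03 : (G.contractEdge u v).Adj ⟨u, hne⟩ R := by
    rw [← hψ0]; exact ψ.map_rel_iff.mpr (by decide)
  have h12 : (G.contractEdge u v).Adj P Q := ψ.map_rel_iff.mpr (by decide)
  have h23 : (G.contractEdge u v).Adj Q R := ψ.map_rel_iff.mpr (by decide)
  have hn02 : ¬(G.contractEdge u v).Adj ⟨u, hne⟩ Q := by
    rw [← hψ0]; exact fun h => absurd (ψ.map_rel_iff.mp h) (by decide)
  have hn13 : ¬(G.contractEdge u v).Adj P R := fun h => absurd (ψ.map_rel_iff.mp h) (by decide)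
  have ne0Q : (⟨u, hne⟩ : {x : V // x ≠ v}) ≠ Q := fun h => hQu (congrArg Subtype.val h).symm
  have nePR : P ≠ R := fun h => hPR (congrArg Subtype.val h)
  -- extract G-level facts
  have hup_or : G.Adj u P.1 ∨ G.Adj v P.1 := by
    rcases (contract_adj G u v _ _).mp h01 with ⟨-, (h | ⟨-, h⟩) | (h | ⟨h, -⟩)⟩
    · exact Or.inl h
    · exact Or.inr h
    · exact Or.inl h.symm
    · exact absurd h hPu
  have hur_or : G.Adj u R.1 ∨ G.Adj v R.1 := by
    rcases (contract_adj G u v _ _).mp h03 with ⟨-, (h | ⟨-, h⟩) | (h | ⟨h, -⟩)⟩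
    · exact Or.inl h
    · exact Or.inr h
    · exact Or.inl h.symm
    · exact absurd h hRu
  have hpq : G.Adj P.1 Q.1 := by
    rcases (contract_adj G u v _ _).mp h12 with ⟨-, (h | ⟨h, -⟩) | (h | ⟨h, -⟩)⟩
    · exact h
    · exact absurd h hPu
    · exact h.symm
    · exact absurd h hQu
  have hqr : G.Adj Q.1 R.1 := by
    rcases (contract_adj G u v _ _).mp h23 with ⟨-, (h | ⟨h, -⟩) | (h | ⟨h, -⟩)⟩
    · exact h
    · exact absurd h hQu
    · exact h.symm
    · exact absurd h hRu
  have hnuq : ¬G.Adj u Q.1 := fun h =>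
    hn02 ((contract_adj G u v _ _).mpr ⟨ne0Q, Or.inl (Or.inl h)⟩)
  have hnvq : ¬G.Adj v Q.1 := fun h =>
    hn02 ((contract_adj G u v _ _).mpr ⟨ne0Q, Or.inl (Or.inr ⟨rfl, h⟩)⟩)
  have hnpr : ¬G.Adj P.1 R.1 := fun h =>
    hn13 ((contract_adj G u v _ _).mpr ⟨nePR, Or.inl (Or.inl h)⟩)
  -- surjectivity
  have hsurj : ∀ x : V, x = u ∨ x = P.1 ∨ x = Q.1 ∨ x = R.1 ∨ x = v := by
    intro x
    by_cases hx : x = v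
    · exact Or.inr (Or.inr (Or.inr (Or.inr hx)))
    · have hsa : ψ (ψ.symm ⟨x, hx⟩) = ⟨x, hx⟩ := ψ.apply_symm_apply _
      generalize ψ.symm ⟨x, hx⟩ = i at hsa
      have hi : i = 0 ∨ i = 1 ∨ i = 2 ∨ i = 3 := by omega
      rcases hi with rfl | rfl | rfl | rfl
      · rw [hψ0] at hsa; exact Or.inl (congrArg Subtype.val hsa).symm
      · exact Or.inr (Or.inl (congrArg Subtype.val hsa).symm)
      · exact Or.inr (Or.inr (Or.inl (congrArg Subtype.val hsa).symm))
      · exact Or.inr (Or.inr (Or.inr (Or.inl (congrArg Subtype.val hsa).symm)))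
  have hqv : Q.1 ≠ v := Q.2
  have hpv : P.1 ≠ v := P.2
  have hrv : R.1 ≠ v := R.2
  by_cases hup : G.Adj u P.1
  · -- u-p edge; then ¬u-r, so v-r; then ¬v-p
    have hnur : ¬G.Adj u R.1 := fun h =>
      hfree (embC4 G u P.1 Q.1 R.1 hup hpq hqr h.symm hnuq hnpr hQu.symm hPR)
    have hvr : G.Adj v R.1 := hur_or.resolve_left hnur
    have hnvp : ¬G.Adj v P.1 := fun h =>
      hfree (embC4 G v P.1 Q.1 R.1 h hpq hqr hvr.symm hnvq hnpr (Ne.symm Q.2) hPR)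
    exact c5_of G v u P.1 Q.1 R.1
      (fun x => by rcases hsurj x with h | h | h | h | h <;> tauto)
      huv.symm hup hpq hqr hvr.symm
      hnvp hnvq hnuq hnur hnpr
  · have hvp : G.Adj v P.1 := hup_or.resolve_left hup
    have hnvr : ¬G.Adj v R.1 := fun h =>
      hfree (embC4 G v P.1 Q.1 R.1 hvp hpq hqr h.symm hnvq hnpr (Ne.symm Q.2) hPR)
    have hur : G.Adj u R.1 := hur_or.resolve_right hnvr
    exact c5_of G u v P.1 Q.1 R.1
      (fun x => by rcases hsurj x with h | h | h | h | h <;> tauto)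
      huv hvp hpq hqr hur.symm
      hup hnuq hnvq hnvr hnpr

/-- A finite simple graph is `C_4`-free-split if and only if it is isomorphic to
the cycle `C_5`. -/
theorem stmt19 {V : Type*} [Fintype V] (G : SimpleGraph V) :
    IsFreeSplitOf G (cycleGraph 4) ↔ Nonempty (G ≃g cycleGraph 5) := by
  constructor
  · rintro ⟨hfree, a, b, hadj, ⟨φ⟩⟩
    refine forward G ?_ hadj φ
    rintro ⟨g, hginj, hg⟩
    exact hfree ⟨⟨⟨g, hginj⟩, fun {i j} => hg i j⟩⟩
  · rintro ⟨φ⟩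
    refine ⟨?_, φ.symm 0, φ.symm 1, ?_, ?_⟩
    · rintro ⟨f⟩
      have femb := f.trans φ.toEmbedding
      exact noC4C5 ⟨femb, femb.injective, fun i j => femb.map_rel_iff⟩
    · exact φ.symm.map_rel_iff.mpr (by decide)
    · exact ⟨c4iso.trans (contractIso φ.symm 0 1)⟩
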